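/- Let $p$ be an odd prime and $A \subseteq \mathbb{F}_p$ with $|A| > p^{2/3}$. Then there exists $u \in A\times A$ such that $|\Delta_u(A\times A)| \geq c\,p$ for some absolute constant $c>0$; in particular $A\times A$ determines a positive proportion of all possible distances. -/

import Mathlib

open Finset

def dist2 {R : Type*} [CommRing R] (u v : R × R) : R :=
  (u.1 - v.1) ^ 2 + (u.2 - v.2) ^ 2

def pinnedDist {R : Type*} [CommRing R] [DecidableEq R] (u : R × R) (E : Finset (R × R)) :
    Finset R :=
  E.image (fun v => dist2 u v)

section Aux

variable {p : ℕ} [NeZero p]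

/-- fiber counting function -/
def nuCount (u : ZMod p × ZMod p) (E : Finset (ZMod p × ZMod p)) (t : ZMod p) : ℕ :=
  (E.filter fun v => dist2 u v = t).card

/-- pinned energy -/
def engCount (u : ZMod p × ZMod p) (E : Finset (ZMod p × ZMod p)) : ℕ :=
  ((E ×ˢ E).filter fun q => dist2 u q.1 = dist2 u q.2).card

lemma sum_nu (u : ZMod p × ZMod p) (E : Finset (ZMod p × ZMod p)) :
    ∑ t : ZMod p, nuCount u E t = E.card :=
  (card_eq_sum_card_fiberwise (fun v _ => mem_univ (dist2 u v))).symm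

lemma sum_nu_pinned (u : ZMod p × ZMod p) (E : Finset (ZMod p × ZMod p)) :
    ∑ t ∈ pinnedDist u E, nuCount u E t = E.card :=
  (card_eq_sum_card_fiberwise (fun v hv => mem_image_of_mem _ hv)).symm

lemma sum_nu_sq (u : ZMod p × ZMod p) (E : Finset (ZMod p × ZMod p)) :
    ∑ t : ZMod p, (nuCount u E t) ^ 2 = engCount u E := by
  rw [engCount,
    card_eq_sum_card_fiberwise (f := fun q => dist2 u q.1) (t := univ) (fun q _ => mem_univ _)]
  refine sum_congr rfl fun t _ => ?_
  rw [filter_filter]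
  have : ((E ×ˢ E).filter fun q => dist2 u q.1 = dist2 u q.2 ∧ dist2 u q.1 = t)
      = (E.filter fun v => dist2 u v = t) ×ˢ (E.filter fun v => dist2 u v = t) := by
    ext ⟨v, w⟩
    simp only [mem_filter, mem_product]
    constructor
    · rintro ⟨⟨hv, hw⟩, he, ht⟩
      exact ⟨⟨hv, ht⟩, hw, he ▸ ht⟩
    · rintro ⟨⟨hv, ht⟩, hw, ht'⟩
      exact ⟨⟨hv, hw⟩, ht.trans ht'.symm, ht⟩
  rw [this, card_product, nuCount, sq]

lemma cs_p (u : ZMod p × ZMod p) (E : Finset (ZMod p × ZMod p)) :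
    ((E.card : ℝ)) ^ 2 ≤ (p : ℝ) * (engCount u E : ℝ) := by
  have h1 : (E.card : ℝ) = ∑ t : ZMod p, (nuCount u E t : ℝ) := by
    exact_mod_cast congrArg (Nat.cast : ℕ → ℝ) (sum_nu u E).symm
  have h2 : ∑ t : ZMod p, ((nuCount u E t : ℝ)) ^ 2 = (engCount u E : ℝ) := by
    rw [← sum_nu_sq u E]
    push_cast
    rfl
  calc ((E.card : ℝ)) ^ 2 = (∑ t : ZMod p, (nuCount u E t : ℝ)) ^ 2 := by rw [h1]
    _ ≤ (univ : Finset (ZMod p)).card * ∑ t : ZMod p, ((nuCount u E t : ℝ)) ^ 2 :=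
        sq_sum_le_card_mul_sum_sq
    _ = (p : ℝ) * (engCount u E : ℝ) := by rw [card_univ, ZMod.card, h2]

lemma cs_pin (u : ZMod p × ZMod p) (E : Finset (ZMod p × ZMod p)) :
    ((E.card : ℝ)) ^ 2 ≤ ((pinnedDist u E).card : ℝ) * (engCount u E : ℝ) := by
  have h1 : (E.card : ℝ) = ∑ t ∈ pinnedDist u E, (nuCount u E t : ℝ) := by
    exact_mod_cast congrArg (Nat.cast : ℕ → ℝ) (sum_nu_pinned u E).symm
  have h2 : ∑ t : ZMod p, ((nuCount u E t : ℝ)) ^ 2 = (engCount u E : ℝ) := by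
    rw [← sum_nu_sq u E]
    push_cast
    rfl
  calc ((E.card : ℝ)) ^ 2 = (∑ t ∈ pinnedDist u E, (nuCount u E t : ℝ)) ^ 2 := by rw [h1]
    _ ≤ ((pinnedDist u E).card : ℝ) * ∑ t ∈ pinnedDist u E, ((nuCount u E t : ℝ)) ^ 2 :=
        sq_sum_le_card_mul_sum_sq
    _ ≤ ((pinnedDist u E).card : ℝ) * ∑ t : ZMod p, ((nuCount u E t : ℝ)) ^ 2 := by
        refine mul_le_mul_of_nonneg_left ?_ (by positivity)
        exact sum_le_sum_of_subset_of_nonneg (subset_univ _) (fun _ _ _ => by positivity)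
    _ = ((pinnedDist u E).card : ℝ) * (engCount u E : ℝ) := by rw [h2]

/-- pointwise bound on the number of pins `(a,b)` with `a` free making two points equidistant -/
lemma point_bound [Fact p.Prime] (h2 : (2 : ZMod p) ≠ 0) (b : ZMod p)
    (q : (ZMod p × ZMod p) × (ZMod p × ZMod p)) :
    (univ.filter fun a : ZMod p => dist2 (a, b) q.1 = dist2 (a, b) q.2).card ≤
      (if q.1.1 = q.2.1 then 0 else 1) + p * (if q.1 = q.2 then 1 else 0)
        + p * (if q.1.1 = q.2.1 ∧ q.1.2 + q.2.2 = 2 * b then 1 else 0) := by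
  obtain ⟨⟨x, y⟩, ⟨x', y'⟩⟩ := q
  dsimp only
  by_cases hx : x = x'
  · subst hx
    by_cases hy : (b - y) ^ 2 = (b - y') ^ 2
    · have hcard : (univ.filter fun a : ZMod p =>
          dist2 (a, b) (x, y) = dist2 (a, b) (x, y')).card ≤ p := by
        refine le_trans (card_filter_le _ _) ?_
        rw [card_univ, ZMod.card]
      refine le_trans hcard ?_
      have key : (y' - y) * (2 * b - (y + y')) = 0 := by linear_combination hy
      rcases mul_eq_zero.mp key with h | h
      · have hyy : y = y' := by linear_combination -h
        subst hyy
        split_ifs <;> first | omega | simp_all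
      · have hsum : y + y' = 2 * b := by linear_combination -h
        split_ifs <;> first | omega | simp_all
    · have hempty : (univ.filter fun a : ZMod p =>
          dist2 (a, b) (x, y) = dist2 (a, b) (x, y')).card = 0 := by
        rw [Finset.card_eq_zero, filter_eq_empty_iff]
        intro a _
        intro hcon
        apply hy
        have hcon' : (a - x) ^ 2 + (b - y) ^ 2 = (a - x) ^ 2 + (b - y') ^ 2 := hcon
        linear_combination hcon'
      rw [hempty]
      exact Nat.zero_le _
  · have h1 : (univ.filter fun a : ZMod p =>
        dist2 (a, b) (x, y) = dist2 (a, b) (x', y')).card ≤ 1 := by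
      rw [Finset.card_le_one]
      intro a ha a' ha'
      have hc : (a - x) ^ 2 + (b - y) ^ 2 = (a - x') ^ 2 + (b - y') ^ 2 := (mem_filter.mp ha).2
      have hc' : (a' - x) ^ 2 + (b - y) ^ 2 = (a' - x') ^ 2 + (b - y') ^ 2 :=
        (mem_filter.mp ha').2
      have hkey : (2 * (x' - x)) * a = (2 * (x' - x)) * a' := by linear_combination hc - hc'
      exact mul_left_cancel₀ (mul_ne_zero h2 (sub_ne_zero_of_ne (Ne.symm hx))) hkey
    refine le_trans h1 ?_
    split_ifs <;> first | omega | simp_all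

lemma sum_eng_le [Fact p.Prime] (h2 : (2 : ZMod p) ≠ 0) (A : Finset (ZMod p)) :
    ∑ u ∈ (univ : Finset (ZMod p)) ×ˢ A, engCount u (A ×ˢ A)
      ≤ A.card ^ 5 + 2 * p * A.card ^ 3 := by
  rw [sum_product, sum_comm]
  have hb : ∀ b ∈ A, ∑ a : ZMod p, engCount (a, b) (A ×ˢ A)
      ≤ A.card ^ 4 + p * A.card ^ 2 + p * A.card ^ 2 := by
    intro b _
    set E := A ×ˢ A with hEdef
    have hswap : ∑ a : ZMod p, engCount (a, b) E
        = ∑ q ∈ E ×ˢ E, (univ.filter fun a : ZMod p =>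
            dist2 (a, b) q.1 = dist2 (a, b) q.2).card := by
      calc ∑ a : ZMod p, engCount (a, b) E
          = ∑ a : ZMod p, ∑ q ∈ E ×ˢ E,
              (if dist2 (a, b) q.1 = dist2 (a, b) q.2 then 1 else 0) := by
            refine sum_congr rfl fun a _ => ?_
            rw [engCount, card_filter]
        _ = ∑ q ∈ E ×ˢ E, ∑ a : ZMod p,
              (if dist2 (a, b) q.1 = dist2 (a, b) q.2 then 1 else 0) := sum_comm
        _ = _ := by
            refine sum_congr rfl fun q _ => ?_
            rw [card_filter]
    rw [hswap]
    have hpt := fun (q : (ZMod p × ZMod p) × (ZMod p × ZMod p)) => point_bound h2 b q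
    calc ∑ q ∈ E ×ˢ E, (univ.filter fun a : ZMod p =>
            dist2 (a, b) q.1 = dist2 (a, b) q.2).card
        ≤ ∑ q ∈ E ×ˢ E, ((if q.1.1 = q.2.1 then 0 else 1)
            + p * (if q.1 = q.2 then 1 else 0)
            + p * (if q.1.1 = q.2.1 ∧ q.1.2 + q.2.2 = 2 * b then 1 else 0)) :=
          sum_le_sum fun q _ => hpt q
      _ = (∑ q ∈ E ×ˢ E, (if q.1.1 = q.2.1 then 0 else 1))
            + p * (∑ q ∈ E ×ˢ E, (if q.1 = q.2 then 1 else 0))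
            + p * (∑ q ∈ E ×ˢ E, (if q.1.1 = q.2.1 ∧ q.1.2 + q.2.2 = 2 * b then 1 else 0)) := by
          rw [sum_add_distrib, sum_add_distrib, mul_sum, mul_sum]
      _ ≤ A.card ^ 4 + p * A.card ^ 2 + p * A.card ^ 2 := by
          have e1 : ∑ q ∈ E ×ˢ E, (if q.1.1 = q.2.1 then 0 else 1) ≤ A.card ^ 4 := by
            calc ∑ q ∈ E ×ˢ E, (if q.1.1 = q.2.1 then 0 else 1)
                ≤ ∑ _q ∈ E ×ˢ E, 1 := sum_le_sum fun q _ => by split <;> omega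
              _ = A.card ^ 4 := by
                  rw [sum_const, smul_eq_mul, mul_one, card_product, hEdef, card_product]
                  ring
          have e2 : ∑ q ∈ E ×ˢ E, (if q.1 = q.2 then 1 else 0) ≤ A.card ^ 2 := by
            have hcf : (∑ q ∈ E ×ˢ E, (if q.1 = q.2 then 1 else 0))
                = ((E ×ˢ E).filter fun q => q.1 = q.2).card := (card_filter _ _).symm
            rw [hcf]
            have : ((E ×ˢ E).filter fun q => q.1 = q.2).card ≤ E.card := by
              refine card_le_card_of_injOn (fun q => q.1)
                (fun q hq => (mem_product.mp (mem_filter.mp hq).1).1) ?_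
              intro q hq r hr h
              have h' : q.1 = r.1 := h
              have hq2 : q.1 = q.2 := (mem_filter.mp hq).2
              have hr2 : r.1 = r.2 := (mem_filter.mp hr).2
              exact Prod.ext h' (by rw [← hq2, ← hr2, h'])
            calc _ ≤ E.card := this
              _ = A.card ^ 2 := by rw [hEdef, card_product]; ring
          have e3 : ∑ q ∈ E ×ˢ E,
              (if q.1.1 = q.2.1 ∧ q.1.2 + q.2.2 = 2 * b then 1 else 0) ≤ A.card ^ 2 := by
            have hcf : (∑ q ∈ E ×ˢ E, (if q.1.1 = q.2.1 ∧ q.1.2 + q.2.2 = 2 * b then 1 else 0))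
                = ((E ×ˢ E).filter fun q => q.1.1 = q.2.1 ∧ q.1.2 + q.2.2 = 2 * b).card :=
              (card_filter _ _).symm
            rw [hcf]
            have : ((E ×ˢ E).filter fun q => q.1.1 = q.2.1 ∧ q.1.2 + q.2.2 = 2 * b).card
                ≤ E.card := by
              refine card_le_card_of_injOn (fun q => q.1)
                (fun q hq => (mem_product.mp (mem_filter.mp hq).1).1) ?_
              intro q hq r hr h
              have h' : q.1 = r.1 := h
              obtain ⟨ha1, ha2⟩ := (mem_filter.mp hq).2
              obtain ⟨hb1, hb2⟩ := (mem_filter.mp hr).2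
              refine Prod.ext h' (Prod.ext ?_ ?_)
              · rw [← ha1, ← hb1, h']
              · have eq1 : q.2.2 = 2 * b - q.1.2 := by linear_combination ha2
                have eq2 : r.2.2 = 2 * b - r.1.2 := by linear_combination hb2
                rw [eq1, eq2, h']
            calc _ ≤ E.card := this
              _ = A.card ^ 2 := by rw [hEdef, card_product]; ring
          have := Nat.mul_le_mul_left p e2
          have := Nat.mul_le_mul_left p e3
          omega
  calc ∑ b ∈ A, ∑ a : ZMod p, engCount (a, b) (A ×ˢ A)
      ≤ ∑ _b ∈ A, (A.card ^ 4 + p * A.card ^ 2 + p * A.card ^ 2) := sum_le_sum hb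
    _ = A.card ^ 5 + 2 * p * A.card ^ 3 := by
        rw [sum_const, smul_eq_mul]; ring

end Aux

theorem stmt1 :
    ∃ c : ℝ, 0 < c ∧
      ∀ (p : ℕ), p.Prime → Odd p → ∀ A : Finset (ZMod p),
        (A.card : ℝ) > (p : ℝ) ^ ((2 : ℝ) / 3) →
        ∃ u ∈ A ×ˢ A, ((pinnedDist u (A ×ˢ A)).card : ℝ) ≥ c * (p : ℝ) := by
  refine ⟨1 / 3, by norm_num, ?_⟩
  intro p hp hodd A hA
  haveI : Fact p.Prime := ⟨hp⟩
  haveI : NeZero p := ⟨hp.pos.ne'⟩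
  have hp2 : p ≠ 2 := by
    rintro rfl
    exact (by decide : ¬ Odd 2) hodd
  have h2 : (2 : ZMod p) ≠ 0 := by
    intro h
    have h' : ((2 : ℕ) : ZMod p) = 0 := by exact_mod_cast h
    have := (CharP.cast_eq_zero_iff (ZMod p) p 2).mp h'
    exact hp2 ((Nat.prime_dvd_prime_iff_eq hp Nat.prime_two).mp this)
  set E : Finset (ZMod p × ZMod p) := A ×ˢ A with hEdef
  have hppos : (0 : ℝ) < p := by exact_mod_cast hp.pos
  have hA0 : (0 : ℝ) < A.card :=
    lt_of_le_of_lt (Real.rpow_nonneg hppos.le _) hA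
  have hAne : A.Nonempty := card_pos.mp (by exact_mod_cast hA0)
  have hcube : (p : ℝ) ^ 2 < (A.card : ℝ) ^ 3 := by
    have h1 : ((p : ℝ) ^ ((2 : ℝ) / 3)) ^ (3 : ℕ) < (A.card : ℝ) ^ (3 : ℕ) :=
      pow_lt_pow_left₀ hA (Real.rpow_nonneg hppos.le _) (by norm_num)
    calc (p : ℝ) ^ 2 = ((p : ℝ) ^ ((2 : ℝ) / 3)) ^ (3 : ℕ) := by
          rw [← Real.rpow_natCast ((p : ℝ) ^ ((2 : ℝ) / 3)) 3, ← Real.rpow_mul hppos.le]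
          norm_num
      _ < (A.card : ℝ) ^ 3 := h1
  -- cardinality facts
  have hEcard : (E.card : ℝ) = (A.card : ℝ) ^ 2 := by
    rw [hEdef, card_product]; push_cast; ring
  have hEcard4 : ((E.card : ℝ)) ^ 2 = (A.card : ℝ) ^ 4 := by rw [hEcard]; ring
  -- nonnegativity of p * eng - n^4
  have hgnn : ∀ u : ZMod p × ZMod p,
      (0 : ℝ) ≤ (p : ℝ) * (engCount u E : ℝ) - (A.card : ℝ) ^ 4 := by
    intro u
    have := cs_p u E
    rw [hEcard4] at this
    linarith
  -- sum over the completed set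
  have hM : ∑ u ∈ (univ : Finset (ZMod p)) ×ˢ A, (engCount u E : ℝ)
      ≤ (A.card : ℝ) ^ 5 + 2 * (p : ℝ) * (A.card : ℝ) ^ 3 := by
    have := sum_eng_le h2 A
    calc ∑ u ∈ (univ : Finset (ZMod p)) ×ˢ A, (engCount u E : ℝ)
        = ((∑ u ∈ (univ : Finset (ZMod p)) ×ˢ A, engCount u E : ℕ) : ℝ) := by push_cast; rfl
      _ ≤ (((A.card ^ 5 + 2 * p * A.card ^ 3 : ℕ)) : ℝ) := by exact_mod_cast this
      _ = (A.card : ℝ) ^ 5 + 2 * (p : ℝ) * (A.card : ℝ) ^ 3 := by push_cast; ring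
  have hsub : ∑ u ∈ E, ((p : ℝ) * (engCount u E : ℝ) - (A.card : ℝ) ^ 4)
      ≤ ∑ u ∈ (univ : Finset (ZMod p)) ×ˢ A,
          ((p : ℝ) * (engCount u E : ℝ) - (A.card : ℝ) ^ 4) := by
    refine sum_le_sum_of_subset_of_nonneg ?_ (fun u _ _ => hgnn u)
    rw [hEdef]
    exact product_subset_product (subset_univ A) Finset.Subset.rfl
  have hsum2 : ∑ u ∈ (univ : Finset (ZMod p)) ×ˢ A,
      ((p : ℝ) * (engCount u E : ℝ) - (A.card : ℝ) ^ 4)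
      ≤ 2 * (p : ℝ) ^ 2 * (A.card : ℝ) ^ 3 := by
    rw [sum_sub_distrib, ← mul_sum, sum_const, card_product, card_univ, ZMod.card,
      nsmul_eq_mul]
    push_cast
    nlinarith [hM, hppos]
  have hexists : ∃ u ∈ E, (p : ℝ) * (engCount u E : ℝ) - (A.card : ℝ) ^ 4
      ≤ 2 * (p : ℝ) ^ 2 * (A.card : ℝ) := by
    by_contra hcon
    push_neg at hcon
    have hEne : E.Nonempty := hAne.product hAne
    have hlt := sum_lt_sum_of_nonempty hEne hcon
    rw [sum_const, nsmul_eq_mul] at hlt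
    have hEcardn : ((E.card : ℕ) : ℝ) = (A.card : ℝ) ^ 2 := hEcard
    rw [hEcardn] at hlt
    have : (A.card : ℝ) ^ 2 * (2 * (p : ℝ) ^ 2 * (A.card : ℝ))
        = 2 * (p : ℝ) ^ 2 * (A.card : ℝ) ^ 3 := by ring
    rw [this] at hlt
    linarith [le_trans hsub hsum2]
  obtain ⟨u, huE, hgu⟩ := hexists
  refine ⟨u, by rw [hEdef] at huE; exact huE, ?_⟩
  have hcs : (A.card : ℝ) ^ 4 ≤ ((pinnedDist u E).card : ℝ) * (engCount u E : ℝ) := by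
    have := cs_pin u E
    rw [hEcard4] at this
    exact this
  have hengb : (p : ℝ) * (engCount u E : ℝ) ≤ 3 * (A.card : ℝ) ^ 4 := by nlinarith
  have hD0 : (0 : ℝ) ≤ ((pinnedDist u E).card : ℝ) := by positivity
  have hfinal : (p : ℝ) * (A.card : ℝ) ^ 4
      ≤ (3 * ((pinnedDist u E).card : ℝ)) * (A.card : ℝ) ^ 4 := by
    calc (p : ℝ) * (A.card : ℝ) ^ 4
        ≤ (p : ℝ) * (((pinnedDist u E).card : ℝ) * (engCount u E : ℝ)) :=
          mul_le_mul_of_nonneg_left hcs hppos.le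
      _ = ((pinnedDist u E).card : ℝ) * ((p : ℝ) * (engCount u E : ℝ)) := by ring
      _ ≤ ((pinnedDist u E).card : ℝ) * (3 * (A.card : ℝ) ^ 4) :=
          mul_le_mul_of_nonneg_left hengb hD0
      _ = (3 * ((pinnedDist u E).card : ℝ)) * (A.card : ℝ) ^ 4 := by ring
  have hn4 : (0 : ℝ) < (A.card : ℝ) ^ 4 := by positivity
  have hple : (p : ℝ) ≤ 3 * ((pinnedDist u E).card : ℝ) :=
    (mul_le_mul_iff_of_pos_right hn4).mp hfinal
  rw [ge_iff_le, hEdef] at *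
  linarith
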